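/- Let q be a prime power, let d be even, write e = d/2, and suppose n ≥ k ≥ d ≥ 2. Let Q ⊆ F_q^{k×n} be any MRD code with minimum rank distance e, i.e., |Q| = q^{n(k−e+1)} and rank(A − B) ≥ e for all distinct A, B ∈ Q. Then A_q(n+k, d, k) ≥ q^{n(k−e+1)} + Σ_{r=e}^{k−e} A_r(Q), where A_r(Q) = |{X ∈ Q : rank(X) = r}|. -/

import Mathlib

open Matrix

/-- The row space of a matrix: the span of its rows. -/
noncomputable def rowSpan {F : Type*} [Field F] {k c : ℕ} (M : Matrix (Fin k) (Fin c) F) :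
    Submodule F (Fin c → F) :=
  Submodule.span F (Set.range M)

/-- The subspace distance `d_S(U, W) = dim(U + W) - dim(U ∩ W)`. -/
noncomputable def sDist {F : Type*} [Field F] {N : ℕ} (U W : Submodule F (Fin N → F)) : ℕ :=
  Module.finrank F ↥(U ⊔ W) - Module.finrank F ↥(U ⊓ W)

/-- `rowspace (I_k | A)` as a subspace of `F^(n+k)`, with `I_k` in the first `k` coordinates. -/
noncomputable def liftId {F : Type*} [Field F] {k n : ℕ} (A : Matrix (Fin k) (Fin n) F) :
    Submodule F (Fin (n + k) → F) :=
  rowSpan ((Matrix.fromCols (1 : Matrix (Fin k) (Fin k) F) A).submatrix id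
    ((finSumFinEquiv.trans (finCongr (Nat.add_comm k n))).symm))

/-- `rowspace (B | I_k)` as a subspace of `F^(n+k)`, with `I_k` in the last `k` coordinates. -/
noncomputable def liftIdR {F : Type*} [Field F] {k n : ℕ} (B : Matrix (Fin k) (Fin n) F) :
    Submodule F (Fin (n + k) → F) :=
  rowSpan ((Matrix.fromCols B (1 : Matrix (Fin k) (Fin k) F)).submatrix id finSumFinEquiv.symm)

/-- `A_q(N, d, k)`: the maximum size of a constant dimension code of `k`-dimensional
subspaces of `F^N` with pairwise subspace distances at least `d`. -/
noncomputable def Aq (F : Type*) [Field F] (N d k : ℕ) : ℕ :=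
  sSup {M : ℕ | ∃ C : Set (Submodule F (Fin N → F)), C.Finite ∧ C.ncard = M ∧
    (∀ U ∈ C, Module.finrank F ↥U = k) ∧
    (∀ U ∈ C, ∀ W ∈ C, U ≠ W → d ≤ sDist U W)}

open Module

section Generic
variable {F : Type*} [Field F] {k N s : ℕ}

lemma mem_rowSpan_iff {M : Matrix (Fin k) (Fin N) F} {x : Fin N → F} :
    x ∈ rowSpan M ↔ ∃ c : Fin k → F, x = c ᵥ* M := by
  rw [rowSpan, show Set.range M = Set.range M.row from rfl, ← range_vecMulLinear]
  simp [LinearMap.mem_range, eq_comm]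

lemma vecMul_coord {M : Matrix (Fin k) (Fin N) F} {ι : Fin k → Fin N}
    (hM : ∀ i a, M i (ι a) = if i = a then (1 : F) else 0) (c : Fin k → F) (a : Fin k) :
    (c ᵥ* M) (ι a) = c a := by
  simp only [Matrix.vecMul, dotProduct, hM, mul_ite, mul_one, mul_zero]
  simp

lemma single_vecMul' (M : Matrix (Fin k) (Fin N) F) (i : Fin k) (j : Fin N) :
    ((fun a => if i = a then (1:F) else 0) ᵥ* M) j = M i j := by
  simp only [Matrix.vecMul, dotProduct, ite_mul, one_mul, zero_mul]
  simp

lemma rowSpan_le_inj {M M' : Matrix (Fin k) (Fin N) F} {ι : Fin k → Fin N}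
    (hM : ∀ i a, M i (ι a) = if i = a then (1 : F) else 0)
    (hM' : ∀ i a, M' i (ι a) = if i = a then (1 : F) else 0)
    (h : rowSpan M' ≤ rowSpan M) : M' = M := by
  ext i j
  have hmem : (M' i) ∈ rowSpan M := h (Submodule.subset_span ⟨i, rfl⟩)
  obtain ⟨c, hc⟩ := mem_rowSpan_iff.1 hmem
  have hca : c = fun a => if i = a then (1:F) else 0 := by
    funext a
    have := congrFun hc (ι a)
    rw [vecMul_coord hM, hM'] at this
    exact this.symm
  have := congrFun hc j
  rw [hca, single_vecMul'] at this
  exact this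

lemma submatrix_id_eq_mul (M : Matrix (Fin k) (Fin N) F) (g : Fin s → Fin N) :
    M.submatrix id g = M * (Matrix.of fun j a => if g a = j then (1:F) else 0) := by
  ext i a
  simp only [Matrix.mul_apply, Matrix.of_apply, mul_ite, mul_one, mul_zero,
    Matrix.submatrix_apply, id]
  rw [Finset.sum_ite_eq Finset.univ (g a) (fun j => M i j)]
  simp

lemma rank_submatrix_id_le (M : Matrix (Fin k) (Fin N) F) (g : Fin s → Fin N) :
    (M.submatrix id g).rank ≤ M.rank := by
  rw [submatrix_id_eq_mul]
  exact Matrix.rank_mul_le_left _ _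

lemma rank_of_id_cols {M : Matrix (Fin k) (Fin N) F} {ι : Fin k → Fin N}
    (hM : ∀ i a, M i (ι a) = if i = a then (1 : F) else 0) : M.rank = k := by
  refine le_antisymm (Matrix.rank_le_height M) ?_
  have h1 : M.submatrix id ι = (1 : Matrix (Fin k) (Fin k) F) := by
    ext i a; simp [hM, Matrix.one_apply]
  calc k = ((1 : Matrix (Fin k) (Fin k) F)).rank := by simp
    _ = (M.submatrix id ι).rank := by rw [h1]
    _ ≤ M.rank := rank_submatrix_id_le M ι

lemma finrank_rowSpan (M : Matrix (Fin k) (Fin N) F) :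
    finrank F (rowSpan M) = M.rank := (Matrix.rank_eq_finrank_span_row M).symm

lemma finrank_ker_vecMulLinear (C : Matrix (Fin k) (Fin s) F) :
    finrank F (LinearMap.ker C.vecMulLinear) = k - C.rank := by
  have h1 : finrank F (LinearMap.range C.vecMulLinear) = C.rank := by
    rw [← Matrix.mulVecLin_transpose, ← Matrix.rank_transpose C]
    rfl
  have h2 := LinearMap.finrank_range_add_finrank_ker C.vecMulLinear
  rw [h1] at h2
  have h3 : finrank F (Fin k → F) = k := by simp
  omega

lemma matrix_rank_add_le (P R : Matrix (Fin k) (Fin k) F) :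
    (P + R).rank ≤ P.rank + R.rank := by
  have h : LinearMap.range (P + R).mulVecLin ≤
      LinearMap.range P.mulVecLin ⊔ LinearMap.range R.mulVecLin := by
    rintro x ⟨y, rfl⟩
    rw [Matrix.mulVecLin_apply, Matrix.add_mulVec]
    exact Submodule.add_mem_sup ⟨y, rfl⟩ ⟨y, rfl⟩
  calc (P + R).rank ≤ finrank F ↥(LinearMap.range P.mulVecLin ⊔ LinearMap.range R.mulVecLin) :=
        Submodule.finrank_mono h
    _ ≤ P.rank + R.rank := Submodule.finrank_add_le_finrank_add_finrank _ _

lemma finrank_inf_le {U W : Submodule F (Fin N → F)} (M : Matrix (Fin k) (Fin N) F)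
    (C : Matrix (Fin k) (Fin s) F)
    (h : ∀ x ∈ U ⊓ W, ∃ c : Fin k → F, x = c ᵥ* M ∧ c ᵥ* C = 0) :
    finrank F ↥(U ⊓ W) ≤ k - C.rank := by
  have hle : U ⊓ W ≤ Submodule.map M.vecMulLinear (LinearMap.ker C.vecMulLinear) := by
    intro x hx
    obtain ⟨c, h1, h2⟩ := h x hx
    exact ⟨c, by simpa [LinearMap.mem_ker] using h2, h1.symm⟩
  calc finrank F ↥(U ⊓ W)
      ≤ finrank F ↥(Submodule.map M.vecMulLinear (LinearMap.ker C.vecMulLinear)) :=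
        Submodule.finrank_mono hle
    _ ≤ finrank F ↥(LinearMap.ker C.vecMulLinear) := Submodule.finrank_map_le _ _
    _ = k - C.rank := finrank_ker_vecMulLinear C

end Generic

open Matrix Module




section Specific
variable {F : Type*} [Field F] {k n : ℕ}

/-- left equiv -/
def eL (k n : ℕ) : Fin k ⊕ Fin n ≃ Fin (n + k) := finSumFinEquiv.trans (finCongr (Nat.add_comm k n))
/-- right equiv -/
def eR (k n : ℕ) : Fin n ⊕ Fin k ≃ Fin (n + k) := finSumFinEquiv

/-- generator of liftId -/
def genL (A : Matrix (Fin k) (Fin n) F) : Matrix (Fin k) (Fin (n + k)) F :=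
  (Matrix.fromCols (1 : Matrix (Fin k) (Fin k) F) A).submatrix id (eL k n).symm

/-- generator of liftIdR -/
def genR (B : Matrix (Fin k) (Fin n) F) : Matrix (Fin k) (Fin (n + k)) F :=
  (Matrix.fromCols B (1 : Matrix (Fin k) (Fin k) F)).submatrix id (eR k n).symm

lemma liftId_eq (A : Matrix (Fin k) (Fin n) F) : liftId A = rowSpan (genL A) := rfl
lemma liftIdR_eq (B : Matrix (Fin k) (Fin n) F) : liftIdR B = rowSpan (genR B) := rfl

lemma genL_inl (A : Matrix (Fin k) (Fin n) F) (i a : Fin k) :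
    genL A i (eL k n (Sum.inl a)) = if i = a then (1 : F) else 0 := by
  simp [genL, Matrix.one_apply]

lemma genL_inr (A : Matrix (Fin k) (Fin n) F) (i : Fin k) (b : Fin n) :
    genL A i (eL k n (Sum.inr b)) = A i b := by
  simp [genL]

lemma genR_inr (B : Matrix (Fin k) (Fin n) F) (i a : Fin k) :
    genR B i (eR k n (Sum.inr a)) = if i = a then (1 : F) else 0 := by
  simp [genR, eR, Matrix.one_apply]

lemma genR_inl (B : Matrix (Fin k) (Fin n) F) (i : Fin k) (b : Fin n) :
    genR B i (eR k n (Sum.inl b)) = B i b := by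
  simp [genR, eR]

lemma vecMul_genL_inr (A : Matrix (Fin k) (Fin n) F) (c : Fin k → F) (b : Fin n) :
    (c ᵥ* genL A) (eL k n (Sum.inr b)) = (c ᵥ* A) b := by
  simp [Matrix.vecMul, dotProduct, genL_inr]

lemma vecMul_genR_inl (B : Matrix (Fin k) (Fin n) F) (c : Fin k → F) (b : Fin n) :
    (c ᵥ* genR B) (eR k n (Sum.inl b)) = (c ᵥ* B) b := by
  simp [Matrix.vecMul, dotProduct, genR_inl]

/-- the index map used in the mixed case -/
def rho (hkn : k ≤ n) : Fin k → Fin n := fun i => ⟨n - k + i.val, by omega⟩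

lemma idx1 (hkn : k ≤ n) (i : Fin k) :
    eL k n (Sum.inr (rho hkn i)) = eR k n (Sum.inr i) := by
  apply Fin.ext
  simp [eL, eR, rho]
  omega

lemma idx2 (hkn : k ≤ n) (a : Fin k) :
    eL k n (Sum.inl a) = eR k n (Sum.inl (Fin.castLE hkn a)) := by
  apply Fin.ext
  simp [eL, eR]

lemma vecMul_submatrix_id (M : Matrix (Fin k) (Fin n) F) {s : ℕ} (g : Fin s → Fin n)
    (c : Fin k → F) (a : Fin s) : (c ᵥ* M.submatrix id g) a = (c ᵥ* M) (g a) := by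
  simp [Matrix.vecMul, dotProduct]

end Specific
section Inter
variable {F : Type*} [Field F] {k n : ℕ}

lemma hgenL (A : Matrix (Fin k) (Fin n) F) :
    ∀ i a, genL A i ((fun a => eL k n (Sum.inl a)) a) = if i = a then (1 : F) else 0 :=
  fun i a => genL_inl A i a

lemma hgenR (B : Matrix (Fin k) (Fin n) F) :
    ∀ i a, genR B i ((fun a => eR k n (Sum.inr a)) a) = if i = a then (1 : F) else 0 :=
  fun i a => genR_inr B i a

lemma finrank_liftId (A : Matrix (Fin k) (Fin n) F) :
    Module.finrank F ↥(liftId A) = k := by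
  rw [liftId_eq, finrank_rowSpan, rank_of_id_cols (hgenL A)]

lemma finrank_liftIdR (B : Matrix (Fin k) (Fin n) F) :
    Module.finrank F ↥(liftIdR B) = k := by
  rw [liftIdR_eq, finrank_rowSpan, rank_of_id_cols (hgenR B)]

lemma liftId_injective : Function.Injective (liftId (F := F) (k := k) (n := n)) := by
  intro A B h
  rw [liftId_eq, liftId_eq] at h
  have hAB := rowSpan_le_inj (hgenL B) (hgenL A) h.le
  ext i b
  have := congrFun (congrFun hAB i) (eL k n (Sum.inr b))
  rwa [genL_inr, genL_inr] at this

lemma liftIdR_injective : Function.Injective (liftIdR (F := F) (k := k) (n := n)) := by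
  intro A B h
  rw [liftIdR_eq, liftIdR_eq] at h
  have hAB := rowSpan_le_inj (hgenR B) (hgenR A) h.le
  ext i b
  have := congrFun (congrFun hAB i) (eR k n (Sum.inl b))
  rwa [genR_inl, genR_inl] at this

lemma inter_ll (A B : Matrix (Fin k) (Fin n) F) :
    Module.finrank F ↥(liftId A ⊓ liftId B) ≤ k - (A - B).rank := by
  apply finrank_inf_le (genL A)
  intro x hx
  obtain ⟨c, hc⟩ := mem_rowSpan_iff.1 (liftId_eq A ▸ hx.1)
  obtain ⟨c', hc'⟩ := mem_rowSpan_iff.1 (liftId_eq B ▸ hx.2)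
  have hcc' : c = c' := by
    funext a
    have h1 := congrFun hc (eL k n (Sum.inl a))
    have h2 := congrFun hc' (eL k n (Sum.inl a))
    rw [vecMul_coord (hgenL A)] at h1
    rw [vecMul_coord (hgenL B)] at h2
    rw [← h1, ← h2]
  refine ⟨c, hc, ?_⟩
  funext b
  have h1 := congrFun hc (eL k n (Sum.inr b))
  have h2 := congrFun hc' (eL k n (Sum.inr b))
  rw [vecMul_genL_inr] at h1 h2
  have : (c ᵥ* (A - B)) b = (c ᵥ* A) b - (c ᵥ* B) b := by
    rw [Matrix.vecMul_sub]; rfl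
  rw [this, ← h1, hcc', ← h2]
  simp

lemma inter_rr (A B : Matrix (Fin k) (Fin n) F) :
    Module.finrank F ↥(liftIdR A ⊓ liftIdR B) ≤ k - (A - B).rank := by
  apply finrank_inf_le (genR A)
  intro x hx
  obtain ⟨c, hc⟩ := mem_rowSpan_iff.1 (liftIdR_eq A ▸ hx.1)
  obtain ⟨c', hc'⟩ := mem_rowSpan_iff.1 (liftIdR_eq B ▸ hx.2)
  have hcc' : c = c' := by
    funext a
    have h1 := congrFun hc (eR k n (Sum.inr a))
    have h2 := congrFun hc' (eR k n (Sum.inr a))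
    rw [vecMul_coord (hgenR A)] at h1
    rw [vecMul_coord (hgenR B)] at h2
    rw [← h1, ← h2]
  refine ⟨c, hc, ?_⟩
  funext b
  have h1 := congrFun hc (eR k n (Sum.inl b))
  have h2 := congrFun hc' (eR k n (Sum.inl b))
  rw [vecMul_genR_inl] at h1 h2
  have : (c ᵥ* (A - B)) b = (c ᵥ* A) b - (c ᵥ* B) b := by
    rw [Matrix.vecMul_sub]; rfl
  rw [this, ← h1, hcc', ← h2]
  simp

lemma inter_lr (hkn : k ≤ n) (A X : Matrix (Fin k) (Fin n) F) :
    Module.finrank F ↥(liftId A ⊓ liftIdR X) ≤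
      k - ((1 : Matrix (Fin k) (Fin k) F) -
        X.submatrix id (Fin.castLE hkn) * A.submatrix id (rho hkn)).rank := by
  apply finrank_inf_le (genR X)
  intro x hx
  obtain ⟨c, hc⟩ := mem_rowSpan_iff.1 (liftId_eq A ▸ hx.1)
  obtain ⟨v, hv⟩ := mem_rowSpan_iff.1 (liftIdR_eq X ▸ hx.2)
  refine ⟨v, hv, ?_⟩
  have key1 : c = v ᵥ* X.submatrix id (Fin.castLE hkn) := by
    funext a
    have h1 := congrFun hc (eL k n (Sum.inl a))
    rw [vecMul_coord (hgenL A)] at h1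
    have h2 := congrFun hv (eR k n (Sum.inl (Fin.castLE hkn a)))
    rw [vecMul_genR_inl] at h2
    rw [vecMul_submatrix_id, ← h2, ← idx2 hkn, h1]
  have key2 : v = c ᵥ* A.submatrix id (rho hkn) := by
    funext i
    have h1 := congrFun hv (eR k n (Sum.inr i))
    rw [vecMul_coord (hgenR X)] at h1
    have h2 := congrFun hc (eL k n (Sum.inr (rho hkn i)))
    rw [vecMul_genL_inr] at h2
    rw [vecMul_submatrix_id, ← h2, idx1 hkn, h1]
  rw [Matrix.vecMul_sub, Matrix.vecMul_one, ← Matrix.vecMul_vecMul, ← key1, ← key2, sub_self]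

lemma rank_one_sub_mul (e : ℕ) (he : e ≤ k) (P : Matrix (Fin k) (Fin k) F)
    (hP : P.rank ≤ k - e) :
    e ≤ ((1 : Matrix (Fin k) (Fin k) F) - P).rank := by
  have h1 : (((1 : Matrix (Fin k) (Fin k) F) - P) + P).rank = k := by
    simp
  have h2 := matrix_rank_add_le ((1 : Matrix (Fin k) (Fin k) F) - P) P
  omega

lemma sDist_ge {N : ℕ} {U W : Submodule F (Fin N → F)} {k e : ℕ}
    (hU : Module.finrank F ↥U = k) (hW : Module.finrank F ↥W = k)
    (hinf : Module.finrank F ↥(U ⊓ W) + e ≤ k) : 2 * e ≤ sDist U W := by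
  have hsum := Submodule.finrank_sup_add_finrank_inf_eq U W
  rw [hU, hW] at hsum
  rw [sDist]
  omega

end Inter


theorem stmt5 (q k n d e : ℕ) (hq : IsPrimePow q) (hde : d = 2 * e)
    (hd2 : 2 ≤ d) (hdk : d ≤ k) (hkn : k ≤ n)
    (F : Type*) [Field F] [Fintype F] (hF : Fintype.card F = q)
    (Q : Finset (Matrix (Fin k) (Fin n) F))
    (hcard : Q.card = q ^ (n * (k - e + 1)))
    (hQ : ∀ A ∈ Q, ∀ B ∈ Q, A ≠ B → e ≤ (A - B).rank) :
    q ^ (n * (k - e + 1)) +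
        ∑ r ∈ Finset.Icc e (k - e), (Q.filter (fun X => X.rank = r)).card
      ≤ Aq F (n + k) d k := by
  classical
  have he1 : 1 ≤ e := by omega
  have hek : e ≤ k := by omega
  set Q' : Finset (Matrix (Fin k) (Fin n) F) :=
    Q.filter (fun X => X.rank ∈ Finset.Icc e (k - e)) with hQ'
  have hmem' : ∀ {X : Matrix (Fin k) (Fin n) F}, X ∈ Q' →
      X ∈ Q ∧ e ≤ X.rank ∧ X.rank ≤ k - e := by
    intro X hX
    rw [hQ', Finset.mem_filter, Finset.mem_Icc] at hX
    exact ⟨hX.1, hX.2.1, hX.2.2⟩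
  -- the sum equals the cardinality of Q'
  have hfib : Q'.card = ∑ r ∈ Finset.Icc e (k - e),
      (Q'.filter (fun X => X.rank = r)).card :=
    Finset.card_eq_sum_card_fiberwise (fun X hX => by
      rw [hQ', Finset.mem_coe, Finset.mem_filter] at hX; exact Finset.mem_coe.2 hX.2)
  have hterm : ∀ r ∈ Finset.Icc e (k - e),
      Q.filter (fun X => X.rank = r) = Q'.filter (fun X => X.rank = r) := by
    intro r hr
    rw [Finset.mem_Icc] at hr
    ext X
    simp only [hQ', Finset.mem_filter, Finset.mem_Icc]
    constructor
    · rintro ⟨h1, h2⟩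
      exact ⟨⟨h1, by omega⟩, h2⟩
    · rintro ⟨⟨h1, _⟩, h2⟩
      exact ⟨h1, h2⟩
  have hsum : ∑ r ∈ Finset.Icc e (k - e), (Q.filter (fun X => X.rank = r)).card
      = Q'.card := by
    rw [Finset.sum_congr rfl (fun r hr => by rw [hterm r hr])]
    exact hfib.symm
  -- key mixed intersection bound
  have hkey : ∀ (A X : Matrix (Fin k) (Fin n) F), X.rank ≤ k - e →
      Module.finrank F ↥(liftId A ⊓ liftIdR X) + e ≤ k := by
    intro A X hX
    have h1 := inter_lr hkn A X
    have h2 : e ≤ ((1 : Matrix (Fin k) (Fin k) F) -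
        X.submatrix id (Fin.castLE hkn) * A.submatrix id (rho hkn)).rank := by
      apply rank_one_sub_mul e hek
      calc (X.submatrix id (Fin.castLE hkn) * A.submatrix id (rho hkn)).rank
          ≤ (X.submatrix id (Fin.castLE hkn)).rank := Matrix.rank_mul_le_left _ _
        _ ≤ X.rank := rank_submatrix_id_le _ _
        _ ≤ k - e := hX
    have h3 := Matrix.rank_le_height ((1 : Matrix (Fin k) (Fin k) F) -
        X.submatrix id (Fin.castLE hkn) * A.submatrix id (rho hkn))
    omega
  -- the code
  set Code : Set (Submodule F (Fin (n + k) → F)) :=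
    (fun A => liftId A) '' ↑Q ∪ (fun X => liftIdR X) '' ↑Q' with hCode
  have hdisj : Disjoint ((fun A => liftId A) '' (↑Q : Set (Matrix (Fin k) (Fin n) F)))
      ((fun X => liftIdR X) '' ↑Q') := by
    rw [Set.disjoint_left]
    rintro U ⟨A, hA, rfl⟩ ⟨X, hX, hXU⟩
    have hXr := (hmem' (Finset.mem_coe.1 hX)).2.2
    have h1 := hkey A X hXr
    have hXU' : liftIdR X = liftId A := hXU
    have h2 : Module.finrank F ↥(liftId A ⊓ liftIdR X) = k := by
      rw [hXU', inf_idem, finrank_liftId]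
    omega
  have hfin1 : ((fun A => liftId A) '' (↑Q : Set (Matrix (Fin k) (Fin n) F))).Finite := Q.finite_toSet.image _
  have hfin2 : ((fun X => liftIdR X) '' (↑Q' : Set (Matrix (Fin k) (Fin n) F))).Finite := Q'.finite_toSet.image _
  have hCfin : Code.Finite := hfin1.union hfin2
  have hcardC : Code.ncard = Q.card + Q'.card := by
    rw [hCode, Set.ncard_union_eq hdisj hfin1 hfin2,
      Set.ncard_image_of_injective _ liftId_injective,
      Set.ncard_image_of_injective _ liftIdR_injective,
      Set.ncard_coe_finset, Set.ncard_coe_finset]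
  have hdim : ∀ U ∈ Code, Module.finrank F ↥U = k := by
    rintro U (⟨A, -, rfl⟩ | ⟨X, -, rfl⟩)
    · exact finrank_liftId A
    · exact finrank_liftIdR X
  have hdist : ∀ U ∈ Code, ∀ W ∈ Code, U ≠ W → d ≤ sDist U W := by
    rintro U hU W hW hne
    rw [hde]
    rcases hU with ⟨A, hA, rfl⟩ | ⟨X, hX, rfl⟩ <;>
      rcases hW with ⟨B, hB, rfl⟩ | ⟨Y, hY, rfl⟩
    · -- liftId vs liftId
      have hAB : A ≠ B := fun h => hne (by rw [h])
      have hrk := hQ A (Finset.mem_coe.1 hA) B (Finset.mem_coe.1 hB) hAB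
      have h1 := inter_ll A B
      have h2 := Matrix.rank_le_height (A - B)
      exact sDist_ge (finrank_liftId A) (finrank_liftId B)
        (by show Module.finrank F ↥(liftId A ⊓ liftId B) + e ≤ k; omega)
    · -- liftId vs liftIdR
      have hYr := (hmem' (Finset.mem_coe.1 hY)).2.2
      exact sDist_ge (finrank_liftId A) (finrank_liftIdR Y) (hkey A Y hYr)
    · -- liftIdR vs liftId
      have hXr := (hmem' (Finset.mem_coe.1 hX)).2.2
      have hcomm : sDist (liftIdR X) (liftId B) = sDist (liftId B) (liftIdR X) := by
        rw [sDist, sDist, sup_comm, inf_comm]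
      rw [hcomm]
      exact sDist_ge (finrank_liftId B) (finrank_liftIdR X) (hkey B X hXr)
    · -- liftIdR vs liftIdR
      have hXY : X ≠ Y := fun h => hne (by rw [h])
      have hXQ := (hmem' (Finset.mem_coe.1 hX)).1
      have hYQ := (hmem' (Finset.mem_coe.1 hY)).1
      have hrk := hQ X hXQ Y hYQ hXY
      have h1 := inter_rr X Y
      have h2 := Matrix.rank_le_height (X - Y)
      exact sDist_ge (finrank_liftIdR X) (finrank_liftIdR Y)
        (by show Module.finrank F ↥(liftIdR X ⊓ liftIdR Y) + e ≤ k; omega)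
  haveI hFinite : Finite (Submodule F (Fin (n + k) → F)) :=
    Finite.of_injective (fun U => (U : Set (Fin (n + k) → F))) SetLike.coe_injective
  have hbdd : BddAbove {M : ℕ | ∃ C : Set (Submodule F (Fin (n + k) → F)), C.Finite ∧
      C.ncard = M ∧ (∀ U ∈ C, Module.finrank F ↥U = k) ∧
      (∀ U ∈ C, ∀ W ∈ C, U ≠ W → d ≤ sDist U W)} := by
    refine ⟨Nat.card (Submodule F (Fin (n + k) → F)), ?_⟩
    rintro M ⟨C, hCfin', rfl, -, -⟩
    have := Set.ncard_le_ncard (Set.subset_univ C) Set.finite_univ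
    simpa [Set.ncard_univ] using this
  have hmem : Q.card + Q'.card ∈ {M : ℕ | ∃ C : Set (Submodule F (Fin (n + k) → F)),
      C.Finite ∧ C.ncard = M ∧ (∀ U ∈ C, Module.finrank F ↥U = k) ∧
      (∀ U ∈ C, ∀ W ∈ C, U ≠ W → d ≤ sDist U W)} :=
    ⟨Code, hCfin, hcardC, hdim, hdist⟩
  calc q ^ (n * (k - e + 1)) +
        ∑ r ∈ Finset.Icc e (k - e), (Q.filter (fun X => X.rank = r)).card
      = Q.card + Q'.card := by rw [hcard, hsum]
    _ ≤ Aq F (n + k) d k := le_csSup hbdd hmem
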